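/- Let B be the MBB with all belief bases empty (the MBM with maximal general uncertainty relative to the universal context U). Then for any agent i and any formula φ of the basic epistemic language: φ is satisfiable on the class of MBMs if and only if (B, U) ⊨ ◇ᵢφ, where ◇ᵢφ := ¬□ᵢ¬φ. -/

import Mathlib

/-- Explicit-belief language L₀ over atoms ℕ and agents `Fin n`. -/
inductive Form0 (n : ℕ) : Type
  | atom : ℕ → Form0 n
  | neg : Form0 n → Form0 n
  | conj : Form0 n → Form0 n → Form0 n
  | tri : Fin n → Form0 n → Form0 n

/-- Multi-agent belief base. -/
structure MBB (n : ℕ) where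
  base : Fin n → Set (Form0 n)
  state : Set ℕ

/-- Satisfaction of L₀-formulas at an MBB. -/
def sat0 {n : ℕ} (B : MBB n) : Form0 n → Prop
  | .atom p => p ∈ B.state
  | .neg a => ¬ sat0 B a
  | .conj a b => sat0 B a ∧ sat0 B b
  | .tri i a => a ∈ B.base i

/-- A correct MBB: every explicit belief is true at it. -/
def MBB.Correct {n : ℕ} (B : MBB n) : Prop := ∀ i : Fin n, ∀ a ∈ B.base i, sat0 B a

/-- Epistemic alternative relation: B Rᵢ B' iff B' satisfies everything in agent i's base at B. -/
def EpiAlt {n : ℕ} (i : Fin n) (B B' : MBB n) : Prop := ∀ a ∈ B.base i, sat0 B' a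

/-- Basic epistemic language L_EL. -/
inductive FormEL (n : ℕ) : Type
  | atom : ℕ → FormEL n
  | neg : FormEL n → FormEL n
  | conj : FormEL n → FormEL n → FormEL n
  | box : Fin n → FormEL n → FormEL n

/-- Satisfaction of L_EL at an MBM (B, C). -/
def satEL {n : ℕ} (C : Set (MBB n)) (B : MBB n) : FormEL n → Prop
  | .atom p => p ∈ B.state
  | .neg a => ¬ satEL C B a
  | .conj a b => satEL C B a ∧ satEL C B b
  | .box i a => ∀ B' ∈ C, EpiAlt i B B' → satEL C B' a

namespace Stmt7Aux

attribute [local instance] Classical.propDecidable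

variable {n : ℕ}

/-! ### Boolean helpers in Form0 -/

def orF (a b : Form0 n) : Form0 n := .neg (.conj (.neg a) (.neg b))
def impF (a b : Form0 n) : Form0 n := .neg (.conj a (.neg b))
def falseF : Form0 n := .conj (.atom 0) (.neg (.atom 0))

lemma sat0_orF (Y : MBB n) (a b : Form0 n) : sat0 Y (orF a b) ↔ sat0 Y a ∨ sat0 Y b := by
  simp [orF, sat0]; tauto

lemma sat0_impF (Y : MBB n) (a b : Form0 n) : sat0 Y (impF a b) ↔ (sat0 Y a → sat0 Y b) := by
  simp [impF, sat0]

lemma sat0_falseF (Y : MBB n) : ¬ sat0 Y (falseF (n := n)) := by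
  simp [falseF, sat0]

def bigOr : List (Form0 n) → Form0 n
  | [] => falseF
  | a :: t => orF a (bigOr t)

lemma sat0_bigOr (Y : MBB n) (l : List (Form0 n)) :
    sat0 Y (bigOr l) ↔ ∃ a ∈ l, sat0 Y a := by
  induction l with
  | nil => simp [bigOr, sat0_falseF]
  | cons a t ih => simp [bigOr, sat0_orF, ih]

/-! ### Full description of an MBB -/

def descSet (X : MBB n) : Set (Form0 n) :=
  { χ | (∃ p, χ = .atom p ∧ p ∈ X.state) ∨ (∃ p, χ = .neg (.atom p) ∧ p ∉ X.state)
      ∨ (∃ j χ', χ = .tri j χ' ∧ χ' ∈ X.base j)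
      ∨ (∃ j χ', χ = .neg (.tri j χ') ∧ χ' ∉ X.base j) }

lemma mbb_ext {X Y : MBB n} (hb : X.base = Y.base) (hs : X.state = Y.state) : X = Y := by
  cases X; cases Y; simp_all

lemma desc_spec (X Y : MBB n) : (∀ δ ∈ descSet X, sat0 Y δ) ↔ Y = X := by
  constructor
  · intro h
    apply mbb_ext
    · funext j; ext χ
      constructor
      · intro hχ
        by_contra hc
        exact (h _ (Or.inr (Or.inr (Or.inr ⟨j, χ, rfl, hc⟩)))) (by simpa [sat0] using hχ)
      · intro hχ
        exact h _ (Or.inr (Or.inr (Or.inl ⟨j, χ, rfl, hχ⟩)))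
    · ext p
      constructor
      · intro hp
        by_contra hc
        exact (h _ (Or.inr (Or.inl ⟨p, rfl, hc⟩))) (by simpa [sat0] using hp)
      · intro hp
        exact h _ (Or.inl ⟨p, rfl, hp⟩)
  · rintro rfl δ hδ
    rcases hδ with ⟨p, rfl, hp⟩ | ⟨p, rfl, hp⟩ | ⟨j, χ, rfl, hχ⟩ | ⟨j, χ, rfl, hχ⟩ <;>
      simpa [sat0] using ‹_›

end Stmt7Aux

namespace Stmt7Aux

variable {n : ℕ}

/-! ### Subformulas, depth, atoms -/

def subf : FormEL n → List (FormEL n)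
  | .atom p => [.atom p]
  | .neg a => .neg a :: subf a
  | .conj a b => .conj a b :: (subf a ++ subf b)
  | .box i a => .box i a :: subf a

lemma self_mem_subf (ψ : FormEL n) : ψ ∈ subf ψ := by
  cases ψ <;> simp [subf]

lemma subf_trans {τ ψ χ : FormEL n} (h1 : ψ ∈ subf χ) (h2 : τ ∈ subf ψ) : τ ∈ subf χ := by
  induction χ with
  | atom p => simp [subf] at h1; subst h1; simpa [subf] using h2
  | neg a ih =>
      rcases (by simpa [subf] using h1 : ψ = .neg a ∨ ψ ∈ subf a) with rfl | h
      · exact h2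
      · simp [subf]; right; exact ih h
  | conj a b iha ihb =>
      rcases (by simpa [subf, or_assoc] using h1 : ψ = .conj a b ∨ ψ ∈ subf a ∨ ψ ∈ subf b)
        with rfl | h | h
      · exact h2
      · simp [subf]; right; left; exact iha h
      · simp [subf]; right; right; exact ihb h
  | box j a ih =>
      rcases (by simpa [subf] using h1 : ψ = .box j a ∨ ψ ∈ subf a) with rfl | h
      · exact h2
      · simp [subf]; right; exact ih h

def depthEL : FormEL n → ℕ
  | .atom _ => 0
  | .neg a => depthEL a
  | .conj a b => max (depthEL a) (depthEL b)
  | .box _ a => depthEL a + 1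

def atomsOf : FormEL n → List ℕ
  | .atom p => [p]
  | .neg a => atomsOf a
  | .conj a b => atomsOf a ++ atomsOf b
  | .box _ a => atomsOf a

lemma atom_mem_atomsOf {p : ℕ} {ψ : FormEL n} (h : FormEL.atom p ∈ subf ψ) :
    p ∈ atomsOf ψ := by
  induction ψ with
  | atom q => simp [subf] at h; simp [atomsOf, h]
  | neg a ih => simp [subf] at h; exact ih h
  | conj a b iha ihb =>
      simp [subf] at h
      simp only [atomsOf, List.mem_append]
      rcases h with h | h
      · exact Or.inl (iha h)
      · exact Or.inr (ihb h)
  | box j a ih => simp [subf] at h; exact ih h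

def Abound (φ : FormEL n) : ℕ := (atomsOf φ).foldr max 0 + 1

lemma lt_Abound {p : ℕ} {φ : FormEL n} (h : p ∈ atomsOf φ) : p < Abound φ := by
  have : ∀ l : List ℕ, p ∈ l → p ≤ l.foldr max 0 := by
    intro l hl
    induction l with
    | nil => cases hl
    | cons a t ih =>
        rcases List.mem_cons.mp hl with rfl | h'
        · exact le_max_left _ _
        · exact le_trans (ih h') (le_max_right _ _)
  exact Nat.lt_succ_of_le (this _ h)

end Stmt7Aux

namespace Stmt7Aux

attribute [local instance] Classical.propDecidable

variable {n : ℕ}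

section Canon

variable (φ : FormEL n) (C : Set (MBB n)) (B₀ : MBB n)

instance instFiniteTt : Finite {x : FormEL n // x ∈ subf φ} :=
  (List.finite_toSet (subf φ)).to_subtype

/-- Truth-type of a world relative to the subformulas of φ. -/
noncomputable def ty (w : MBB n) : {x : FormEL n // x ∈ subf φ} → Bool :=
  fun ψ => decide (satEL C w ψ.1)

lemma ty_agree {w w' : MBB n} (h : ty φ C w = ty φ C w') {a : FormEL n} (ha : a ∈ subf φ) :
    satEL C w a ↔ satEL C w' a := by
  have := congrFun h ⟨a, ha⟩
  simpa [ty, decide_eq_decide] using this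

/-- An injection of truth-types into ℕ. -/
noncomputable def eT : ({x : FormEL n // x ∈ subf φ} → Bool) → ℕ :=
  ((countable_iff_exists_injective _).mp inferInstance).choose

lemma eT_inj : Function.Injective (eT φ) :=
  ((countable_iff_exists_injective _).mp inferInstance).choose_spec

/-- Fresh name atom for (level, type). -/
noncomputable def nm (k : ℕ) (σ : {x : FormEL n // x ∈ subf φ} → Bool) : ℕ :=
  Abound φ + Nat.pair k (eT φ σ)

lemma Abound_le_nm (k : ℕ) (σ : {x : FormEL n // x ∈ subf φ} → Bool) : Abound φ ≤ nm φ k σ := Nat.le_add_right _ _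

lemma nm_inj {k k' : ℕ} {σ σ' : {x : FormEL n // x ∈ subf φ} → Bool} (h : nm φ k σ = nm φ k' σ') : k = k' ∧ σ = σ' := by
  have h2 : Nat.pair k (eT φ σ) = Nat.pair k' (eT φ σ') := by
    have := Nat.add_left_cancel h
    exact this
  rw [Nat.pair_eq_pair] at h2
  exact ⟨h2.1, eT_inj φ h2.2⟩

/-- σ is realized by some world of the model (the designated point or a context point). -/
def Rz (σ : {x : FormEL n // x ∈ subf φ} → Bool) : Prop :=
  ∃ w, (w = B₀ ∨ w ∈ C) ∧ ty φ C w = σ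

/-- Representative world of a realized type. -/
noncomputable def rep (σ : {x : FormEL n // x ∈ subf φ} → Bool) : MBB n :=
  if h : Rz φ C B₀ σ then h.choose else B₀

lemma rep_ty {σ : {x : FormEL n // x ∈ subf φ} → Bool} (h : Rz φ C B₀ σ) : ty φ C (rep φ C B₀ σ) = σ := by
  rw [rep, dif_pos h]
  exact h.choose_spec.2

/-- Types of i-successors (in the context C) of the representative of σ. -/
def succT (i : Fin n) (σ : {x : FormEL n // x ∈ subf φ} → Bool) :
    Set ({x : FormEL n // x ∈ subf φ} → Bool) :=
  {τ | ∃ v ∈ C, EpiAlt i (rep φ C B₀ σ) v ∧ ty φ C v = τ}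

noncomputable def succList (i : Fin n) (σ : {x : FormEL n // x ∈ subf φ} → Bool) : List ({x : FormEL n // x ∈ subf φ} → Bool) :=
  (Set.toFinite (succT φ C B₀ i σ)).toFinset.toList

lemma mem_succList {i : Fin n} {σ τ : {x : FormEL n // x ∈ subf φ} → Bool} :
    τ ∈ succList φ C B₀ i σ ↔ τ ∈ succT φ C B₀ i σ := by
  rw [succList, Finset.mem_toList, Set.Finite.mem_toFinset]

/-- State of the canonical MBB at (level k, type σ). -/
def st (k : ℕ) (σ : {x : FormEL n // x ∈ subf φ} → Bool) : Set ℕ :=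
  {p | p < Abound φ ∧ p ∈ (rep φ C B₀ σ).state} ∪ {nm φ k σ}

lemma nm_mem_st {k k' : ℕ} {σ σ' : {x : FormEL n // x ∈ subf φ} → Bool} :
    nm φ k' σ' ∈ st φ C B₀ k σ ↔ (k' = k ∧ σ' = σ) := by
  constructor
  · rintro (⟨hlt, -⟩ | hmem)
    · exact absurd hlt (not_lt.mpr (Abound_le_nm φ _ _))
    · exact nm_inj φ (by simpa using hmem)
  · rintro ⟨rfl, rfl⟩
    exact Or.inr rfl

/-- The canonical MBB at level k for type σ. -/
noncomputable def M : ℕ → ({x : FormEL n // x ∈ subf φ} → Bool) → MBB n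
  | 0, σ => ⟨fun _ => ∅, st φ C B₀ 0 σ⟩
  | (k+1), σ =>
    ⟨fun i =>
      { χ | χ = bigOr ((succList φ C B₀ i σ).map (fun τ => Form0.atom (nm φ k τ)))
          ∨ ∃ τ ∈ succT φ C B₀ i σ, ∃ δ ∈ descSet (M k τ), χ = impF (Form0.atom (nm φ k τ)) δ },
     st φ C B₀ (k+1) σ⟩

lemma M_state (k : ℕ) (σ : {x : FormEL n // x ∈ subf φ} → Bool) : (M φ C B₀ k σ).state = st φ C B₀ k σ := by
  cases k <;> rfl

end Canon

end Stmt7Aux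

namespace Stmt7Aux

attribute [local instance] Classical.propDecidable

variable {n : ℕ} (φ : FormEL n) (C : Set (MBB n)) (B₀ : MBB n)

lemma key_alt (k : ℕ) (σ : {x : FormEL n // x ∈ subf φ} → Bool) (i : Fin n) (X : MBB n) :
    EpiAlt i (M φ C B₀ (k+1) σ) X ↔ ∃ τ ∈ succT φ C B₀ i σ, X = M φ C B₀ k τ := by
  constructor
  · intro hX
    have hbig : sat0 X (bigOr ((succList φ C B₀ i σ).map (fun τ => Form0.atom (nm φ k τ)))) :=
      hX _ (Or.inl rfl)
    rw [sat0_bigOr] at hbig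
    obtain ⟨b, hb, hsatb⟩ := hbig
    obtain ⟨τ, hτl, rfl⟩ := List.mem_map.mp hb
    have hτ : τ ∈ succT φ C B₀ i σ := (mem_succList φ C B₀).mp hτl
    refine ⟨τ, hτ, ((desc_spec (M φ C B₀ k τ) X).mp ?_)⟩
    intro δ hδ
    have hg := hX _ (Or.inr ⟨τ, hτ, δ, hδ, rfl⟩)
    rw [sat0_impF] at hg
    exact hg hsatb
  · rintro ⟨τ, hτ, rfl⟩ a ha
    rcases ha with rfl | ⟨τ', hτ', δ, hδ, rfl⟩
    · rw [sat0_bigOr]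
      refine ⟨Form0.atom (nm φ k τ), List.mem_map_of_mem ((mem_succList φ C B₀).mpr hτ), ?_⟩
      show nm φ k τ ∈ (M φ C B₀ k τ).state
      rw [M_state]
      exact (nm_mem_st φ C B₀).mpr ⟨rfl, rfl⟩
    · rw [sat0_impF]
      intro hname
      have hmem : nm φ k τ' ∈ (M φ C B₀ k τ).state := hname
      rw [M_state, nm_mem_st] at hmem
      obtain ⟨-, rfl⟩ := hmem
      exact (desc_spec _ _).mpr rfl δ hδ

lemma truth : ∀ ψ : FormEL n, ψ ∈ subf φ → ∀ k, depthEL ψ ≤ k →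
    ∀ σ : {x : FormEL n // x ∈ subf φ} → Bool, Rz φ C B₀ σ →
    (satEL Set.univ (M φ C B₀ k σ) ψ ↔ satEL C (rep φ C B₀ σ) ψ) := by
  intro ψ
  induction ψ with
  | atom p =>
      intro hψ k _ σ _
      have hp : p < Abound φ := lt_Abound (atom_mem_atomsOf hψ)
      show p ∈ (M φ C B₀ k σ).state ↔ p ∈ (rep φ C B₀ σ).state
      rw [M_state]
      constructor
      · rintro (⟨-, h⟩ | h)
        · exact h
        · exfalso
          rw [Set.mem_singleton_iff] at h
          subst h
          exact absurd hp (not_lt.mpr (Abound_le_nm φ _ _))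
      · intro h
        exact Or.inl ⟨hp, h⟩
  | neg a ih =>
      intro hψ k hk σ hσ
      have ha : a ∈ subf φ := subf_trans hψ (by simp [subf, self_mem_subf])
      show ¬ _ ↔ ¬ _
      exact not_congr (ih ha k hk σ hσ)
  | conj a b iha ihb =>
      intro hψ k hk σ hσ
      have ha : a ∈ subf φ := subf_trans hψ (by simp [subf, self_mem_subf])
      have hb : b ∈ subf φ := subf_trans hψ (by simp [subf, self_mem_subf])
      simp only [depthEL, max_le_iff] at hk
      show _ ∧ _ ↔ _ ∧ _
      exact and_congr (iha ha k hk.1 σ hσ) (ihb hb k hk.2 σ hσ)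
  | box j a ih =>
      intro hψ k hk σ hσ
      have ha : a ∈ subf φ := subf_trans hψ (by simp [subf, self_mem_subf])
      simp only [depthEL] at hk
      cases k with
      | zero => omega
      | succ k =>
        have hka : depthEL a ≤ k := by omega
        show (∀ X ∈ Set.univ, EpiAlt j (M φ C B₀ (k+1) σ) X → satEL Set.univ X a) ↔
          (∀ v ∈ C, EpiAlt j (rep φ C B₀ σ) v → satEL C v a)
        constructor
        · intro H v hv hep
          have hτ : ty φ C v ∈ succT φ C B₀ j σ := ⟨v, hv, hep, rfl⟩
          have hRz : Rz φ C B₀ (ty φ C v) := ⟨v, Or.inr hv, rfl⟩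
          have h1 : satEL Set.univ (M φ C B₀ k (ty φ C v)) a :=
            H _ (Set.mem_univ _) ((key_alt φ C B₀ k σ j _).mpr ⟨_, hτ, rfl⟩)
          have h3 : satEL C (rep φ C B₀ (ty φ C v)) a := (ih ha k hka _ hRz).mp h1
          exact (ty_agree φ C (rep_ty φ C B₀ hRz) ha).mp h3
        · intro H X _ hX
          obtain ⟨τ, hτ, rfl⟩ := (key_alt φ C B₀ k σ j X).mp hX
          obtain ⟨v, hv, hep, hty⟩ := hτ
          have hRz : Rz φ C B₀ τ := ⟨v, Or.inr hv, hty⟩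
          have hva : satEL C v a := H v hv hep
          have h3 : satEL C (rep φ C B₀ τ) a :=
            (ty_agree φ C ((rep_ty φ C B₀ hRz).trans hty.symm) ha).mpr hva
          exact (ih ha k hka τ hRz).mpr h3

end Stmt7Aux

namespace Stmt7Aux

lemma sat_univ {n : ℕ} {φ : FormEL n} {C' : Set (MBB n)} {B' : MBB n} (h : satEL C' B' φ) :
    ∃ X : MBB n, satEL Set.univ X φ := by
  have hRz : Rz φ C' B' (ty φ C' B') := ⟨B', Or.inl rfl, rfl⟩
  refine ⟨M φ C' B' (depthEL φ) (ty φ C' B'),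
    (truth φ C' B' φ (self_mem_subf φ) (depthEL φ) le_rfl _ hRz).mpr ?_⟩
  exact (ty_agree φ C' (rep_ty φ C' B' hRz) (self_mem_subf φ)).mpr h

end Stmt7Aux

/-- with B the MBB with all bases empty (maximal general uncertainty) and U the
universal context, φ is satisfiable on the class of MBMs iff (B, U) ⊨ ◇ᵢφ. -/
theorem stmt7 (n : ℕ) (i : Fin n) (φ : FormEL n) (B : MBB n) (h : ∀ j : Fin n, B.base j = ∅) :
    (∃ (B' : MBB n) (C' : Set (MBB n)), satEL C' B' φ) ↔
      satEL Set.univ B (.neg (.box i (.neg φ))) := by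
  constructor
  · rintro ⟨B', C', hB'⟩
    obtain ⟨X, hX⟩ := Stmt7Aux.sat_univ hB'
    intro H
    exact H X (Set.mem_univ X)
      (fun a ha => by rw [h i] at ha; exact absurd ha (Set.notMem_empty a)) hX
  · intro H
    by_contra hno
    push_neg at hno
    apply H
    intro X _ _ hX
    exact hno X Set.univ hX
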